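/- Let G be a connected paw-free finite simple graph. Then G is triangle-free or complete multipartite: either no three vertices of G are pairwise adjacent, or the vertex set of G can be partitioned into nonempty stable sets such that any two vertices lying in different parts of the partition are adjacent. -/

import Mathlib

/-- The paw: vertices `0,1,2,3` with edges `01, 02, 12, 03`. -/
def pawGraph : SimpleGraph (Fin 4) :=
  SimpleGraph.fromRel (fun a b =>
    (a = 0 ∧ b = 1) ∨ (a = 0 ∧ b = 2) ∨ (a = 1 ∧ b = 2) ∨ (a = 0 ∧ b = 3))

/-- If `G` is paw-free and has a triangle `x y z` with a vertex `d` adjacent to `x`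
but not to `y` or `z`, contradiction. -/
lemma pawA {V : Type*} {G : SimpleGraph V} (hpaw : IsEmpty (pawGraph ↪g G))
    {x y z d : V} (hxy : G.Adj x y) (hxz : G.Adj x z) (hyz : G.Adj y z)
    (hdx : G.Adj d x) (hdy : ¬ G.Adj d y) (hdz : ¬ G.Adj d z) : False := by
  have hyd : ¬ G.Adj y d := fun h => hdy h.symm
  have hzd : ¬ G.Adj z d := fun h => hdz h.symm
  have hne_dy : d ≠ y := by rintro rfl; exact hdz hyz
  have hne_dz : d ≠ z := by rintro rfl; exact hdy hyz.symm
  have hne_xy : x ≠ y := hxy.ne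
  have hne_xz : x ≠ z := hxz.ne
  have hne_yz : y ≠ z := hyz.ne
  have hne_dx : d ≠ x := hdx.ne
  let f : Fin 4 → V := ![x, y, z, d]
  have hinj : Function.Injective f := by
    intro a b hab
    fin_cases a <;> fin_cases b <;> first | rfl |
      (exfalso; simp only [f, Matrix.cons_val_zero, Matrix.cons_val_one, Matrix.head_cons,
        Matrix.cons_val_two, Matrix.tail_cons, Matrix.cons_val_three] at hab;
       first
       | exact hne_xy hab | exact hne_xz hab | exact hne_yz hab
       | exact hne_dy hab | exact hne_dz hab | exact hne_dx hab
       | exact hne_xy hab.symm | exact hne_xz hab.symm | exact hne_yz hab.symm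
       | exact hne_dy hab.symm | exact hne_dz hab.symm | exact hne_dx hab.symm)
  refine hpaw.elim ⟨⟨f, hinj⟩, ?_⟩
  intro a b
  fin_cases a <;> fin_cases b <;>
    simp only [f, Matrix.cons_val_zero, Matrix.cons_val_one, Matrix.head_cons,
      Matrix.cons_val_two, Matrix.tail_cons, Matrix.cons_val_three] <;>
    simp only [pawGraph, SimpleGraph.fromRel_adj] <;>
    simp [hxy, hxz, hyz, hdx, hxy.symm, hxz.symm, hyz.symm, hdx.symm,
      hdy, hdz, hyd, hzd, G.irrefl, hne_dy, hne_dz, hne_dy.symm, hne_dz.symm,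
      Fin.ext_iff] <;> decide

theorem stmt19 {V : Type*} [Fintype V] (G : SimpleGraph V)
    (hconn : G.Connected)
    (hpaw : IsEmpty (pawGraph ↪g G)) :
    G.CliqueFree 3 ∨
      ∃ P : Set (Set V),
        (∀ p ∈ P, p.Nonempty) ∧
        (∀ x : V, ∃ p ∈ P, x ∈ p) ∧
        (∀ p ∈ P, ∀ q ∈ P, p = q ∨ Disjoint p q) ∧
        (∀ p ∈ P, ∀ u ∈ p, ∀ w ∈ p, ¬ G.Adj u w) ∧
        (∀ p ∈ P, ∀ q ∈ P, p ≠ q → ∀ u ∈ p, ∀ w ∈ q, G.Adj u w) := by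
  classical
  by_cases htf : G.CliqueFree 3
  · exact Or.inl htf
  right
  -- extract a triangle
  obtain ⟨f⟩ := (SimpleGraph.not_cliqueFree_iff 3).mp htf
  have htri : ∃ x y z : V, G.Adj x y ∧ G.Adj x z ∧ G.Adj y z := by
    refine ⟨f 0, f 1, f 2, ?_, ?_, ?_⟩ <;>
      · apply f.toHom.map_adj; simp [SimpleGraph.top_adj]
  -- every vertex lies in a triangle
  set Tri : V → Prop := fun v => ∃ b c, G.Adj v b ∧ G.Adj v c ∧ G.Adj b c with hTri
  have step : ∀ {a b : V}, Tri a → G.Adj a b → Tri b := by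
    rintro a b ⟨y, z, hay, haz, hyz⟩ hab
    by_cases hby : G.Adj b y
    · exact ⟨a, y, hab.symm, hby, hay⟩
    by_cases hbz : G.Adj b z
    · exact ⟨a, z, hab.symm, hbz, haz⟩
    exact absurd (pawA hpaw hay haz hyz hab.symm hby hbz) not_false
  have key : ∀ {a b : V} (w : G.Walk a b), Tri a → Tri b := by
    intro a b w
    induction w with
    | nil => exact id
    | cons h _ ih => exact fun ha => ih (step ha h)
  have allTri : ∀ v, Tri v := by
    obtain ⟨x, y, z, h1, h2, h3⟩ := htri
    intro v
    obtain ⟨w⟩ := (hconn x v)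
    exact key w ⟨y, z, h1, h2, h3⟩
  -- every edge lies in a triangle
  have edgeTri : ∀ {u v : V}, G.Adj u v → ∃ w, G.Adj u w ∧ G.Adj v w := by
    intro u v huv
    obtain ⟨b, c, hvb, hvc, hbc⟩ := allTri v
    by_cases hub : G.Adj u b
    · exact ⟨b, hub, hvb⟩
    by_cases huc : G.Adj u c
    · exact ⟨c, huc, hvc⟩
    exact absurd (pawA hpaw hvb hvc hbc huv hub huc) not_false
  -- key transitivity-type claim
  have star : ∀ (a c b : V), G.Adj a c → G.Adj b a ∨ G.Adj b c := by
    have main : ∀ n (a c b : V), G.dist b a = n → G.Adj a c → G.Adj b a ∨ G.Adj b c := by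
      intro n
      induction n using Nat.strong_induction_on with
      | _ n ih =>
        intro a c b hd hac
        match n, hd with
        | 0, hd =>
          have : b = a := ((hconn b a).dist_eq_zero_iff).mp hd
          subst this
          exact Or.inr hac
        | 1, hd =>
          exact Or.inl (SimpleGraph.dist_eq_one_iff_adj.mp hd)
        | (m+2), hd =>
          by_contra hcon
          push_neg at hcon
          obtain ⟨hba, hbc⟩ := hcon
          obtain ⟨w, hw⟩ := (hconn b a).exists_walk_length_eq_dist
          rw [hd] at hw
          cases w with
          | nil => simp at hw
          | cons h p =>
            rename_i u
            have hp : p.length = m + 1 := by simpa using hw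
            have hdu : G.dist u a ≤ m + 1 := by
              rw [← hp]; exact SimpleGraph.dist_le p
            have hlt : G.dist u a < m + 2 := lt_of_le_of_lt hdu (by omega)
            have hcase := ih (G.dist u a) hlt a c u rfl hac
            -- h : G.Adj b u
            rcases hcase with hua | huc
            · -- edge u a in a triangle u a w
              obtain ⟨t, hut, hat⟩ := edgeTri hua
              -- b adj u; b must be adjacent to t
              have hbt : G.Adj b t := by
                by_contra hbt
                exact pawA hpaw hua hut hat h hba hbt
              -- c adj a; c adjacent to u or t
              by_cases hcu : G.Adj c u
              · exact pawA hpaw hua hcu.symm hac h hba hbc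
              by_cases hct : G.Adj c t
              · exact pawA hpaw hat.symm hct.symm hac hbt hba hbc
              exact pawA hpaw hua.symm hat hut hac.symm hcu hct
            · -- edge u c in a triangle
              obtain ⟨t, hut, hct⟩ := edgeTri huc
              have hbt : G.Adj b t := by
                by_contra hbt
                exact pawA hpaw huc hut hct h hbc hbt
              by_cases hau : G.Adj a u
              · exact pawA hpaw hau.symm huc hac h hba hbc
              by_cases hat : G.Adj a t
              · exact pawA hpaw hat.symm hct.symm hac hbt hba hbc
              exact pawA hpaw huc.symm hct hut hac hau hat
    intro a c b hac
    exact main (G.dist b a) a c b rfl hac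
  -- non-adjacency is "transitive"
  have ntrans : ∀ {x y z : V}, ¬ G.Adj x y → ¬ G.Adj y z → ¬ G.Adj x z := by
    intro x y z h1 h2 hxz
    rcases star x z y hxz with h | h
    · exact h1 h.symm
    · exact h2 h
  -- build the partition
  set part : V → Set V := fun x => {y | ¬ G.Adj x y} with hpart
  have hmem : ∀ x, x ∈ part x := fun x => G.irrefl
  have hpeq : ∀ {x z y : V}, y ∈ part x → y ∈ part z → part x = part z := by
    intro x z y hyx hyz
    have hxz : ¬ G.Adj x z := ntrans hyx (fun h => hyz h.symm)
    ext w
    constructor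
    · intro hw
      exact ntrans (fun h => hxz h.symm) hw
    · intro hw
      exact ntrans hxz hw
  refine ⟨Set.range part, ?_, ?_, ?_, ?_, ?_⟩
  · rintro p ⟨x, rfl⟩; exact ⟨x, hmem x⟩
  · intro x; exact ⟨part x, ⟨x, rfl⟩, hmem x⟩
  · rintro p ⟨x, rfl⟩ q ⟨z, rfl⟩
    by_cases hdisj : Disjoint (part x) (part z)
    · exact Or.inr hdisj
    · left
      rw [Set.not_disjoint_iff] at hdisj
      obtain ⟨y, hy1, hy2⟩ := hdisj
      exact hpeq hy1 hy2
  · rintro p ⟨x, rfl⟩ u hu w hw huw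
    rcases star u w x huw with h | h
    · exact hu h
    · exact hw h
  · rintro p ⟨x, rfl⟩ q ⟨z, rfl⟩ hne u hu w hw
    by_contra huw
    apply hne
    have huz : u ∈ part z := ntrans hw (fun h => huw h.symm)
    exact hpeq hu huz
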